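/- For p, ξ ∈ ℂ with 0 < |p| < 1 and ξ ≠ 0, one has ∑_{n ∈ ℤ} (-1)ⁿ ξⁿ p^{n(n-1)/2} = ∏_{k=0}^∞ (1 - ξ p^k)(1 - p^{k+1})(1 - p^{k+1} ξ^{-1}), where the bilateral series converges absolutely. -/

import Mathlib

open Finset Filter Topology Complex

namespace JTP
noncomputable section


def e (n : ℤ) : ℤ := n * (n - 1) / 2

lemma two_mul_e (n : ℤ) : 2 * e n = n * (n - 1) := by
  have h : Even (n * (n - 1)) := by
    have := Int.even_mul_succ_self (n - 1)
    simpa [sub_add_cancel, mul_comm] using this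
  exact Int.two_mul_ediv_two_of_even h

lemma e_sub (x N : ℤ) : e (x - N) = e x - N * x + e (N + 1) := by
  refine mul_left_cancel₀ (two_ne_zero (α := ℤ)) ?_
  calc 2 * e (x - N) = (x - N) * (x - N - 1) := two_mul_e _
    _ = x * (x - 1) - 2 * (N * x) + (N + 1) * (N + 1 - 1) := by ring
    _ = 2 * e x - 2 * (N * x) + 2 * e (N + 1) := by rw [two_mul_e, two_mul_e]
    _ = 2 * (e x - N * x + e (N + 1)) := by ring

lemma e_succ (n : ℤ) : e (n + 1) = e n + n := by
  refine mul_left_cancel₀ (two_ne_zero (α := ℤ)) ?_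
  calc 2 * e (n + 1) = (n + 1) * (n + 1 - 1) := two_mul_e _
    _ = n * (n - 1) + 2 * n := by ring
    _ = 2 * e n + 2 * n := by rw [two_mul_e]
    _ = 2 * (e n + n) := by ring

lemma e_natCast (m : ℕ) : e (m : ℤ) = (m.choose 2 : ℤ) := by
  induction m with
  | zero => simp [e]
  | succ m ih =>
      have h1 : ((m : ℤ) + 1) = ((m + 1 : ℕ) : ℤ) := by push_cast; ring
      have := e_succ (m : ℤ)
      rw [h1] at this
      rw [this, ih, Nat.choose_succ_succ]
      push_cast [Nat.choose_one_right]
      ring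

lemma e_neg (m : ℤ) : e (-m) = e (m + 1) := by
  refine mul_left_cancel₀ (two_ne_zero (α := ℤ)) ?_
  rw [two_mul_e, two_mul_e]; ring

lemma e_neg_natCast (m : ℕ) : e (-(m : ℤ)) = ((m + 1).choose 2 : ℤ) := by
  rw [e_neg]
  have : ((m : ℤ) + 1) = ((m + 1 : ℕ) : ℤ) := by push_cast; ring
  rw [this, e_natCast]

lemma e_nonneg (n : ℤ) : 0 ≤ e n := by
  have h : 0 ≤ n * (n - 1) := by rcases le_or_gt n 0 with h | h <;> nlinarith
  have := two_mul_e n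
  omega

lemma choose_two_add (N : ℕ) : (N + 1).choose 2 + N.choose 2 = N * N := by
  induction N with
  | zero => simp
  | succ N ih =>
      have h1 : (N + 2).choose 2 = (N + 1).choose 2 + (N + 1) := by
        rw [Nat.choose_succ_succ]; simp [Nat.choose_one_right]; ring
      have h2 : (N + 1).choose 2 = N.choose 2 + N := by
        rw [Nat.choose_succ_succ]; simp [Nat.choose_one_right]; ring
      rw [show N + 1 + 1 = N + 2 from rfl, h1, h2]
      nlinarith [ih]



variable (p : ℂ)

def Q (m : ℕ) : ℂ := ∏ i ∈ range m, (1 - p ^ (i + 1))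

def num (N m : ℕ) : ℂ := ∏ i ∈ range m, (1 - p ^ (N - i))

def qb (N m : ℕ) : ℂ := ∏ i ∈ range m, ((1 - p ^ (N - i)) / (1 - p ^ (i + 1)))

lemma qb_eq_num_div_Q (N m : ℕ) : qb p N m = num p N m / Q p m := by
  rw [qb, num, Q, prod_div_distrib]

variable {p}

lemma one_sub_pow_ne (hp1 : ‖p‖ < 1) (k : ℕ) (hk : 1 ≤ k) : 1 - p ^ k ≠ 0 := by
  intro h
  have hpk : p ^ k = 1 := by linear_combination -h
  have : ‖p ^ k‖ < 1 := by
    rw [norm_pow]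
    calc ‖p‖ ^ k ≤ ‖p‖ ^ 1 := pow_le_pow_of_le_one (norm_nonneg _) hp1.le hk
      _ < 1 := by simpa using hp1
  rw [hpk] at this; simp at this

lemma Q_ne (hp1 : ‖p‖ < 1) (m : ℕ) : Q p m ≠ 0 :=
  prod_ne_zero_iff.2 fun i _ => one_sub_pow_ne hp1 (i + 1) (Nat.le_add_left 1 i)

lemma qb_zero {N m : ℕ} (h : N < m) : qb p N m = 0 := by
  rw [qb]
  refine prod_eq_zero (mem_range.2 h) ?_
  simp [Nat.sub_self]

lemma num_diag (N : ℕ) : num p N N = Q p N := by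
  rw [num, Q, ← prod_range_reflect]
  refine prod_congr rfl fun i hi => ?_
  rw [mem_range] at hi
  have h : N - (N - 1 - i) = i + 1 := by omega
  rw [h]

lemma qb_diag (hp1 : ‖p‖ < 1) (N : ℕ) : qb p N N = 1 := by
  rw [qb_eq_num_div_Q, num_diag, div_self (Q_ne hp1 N)]

lemma num_succ_left {N m : ℕ} (hm : m ≤ N) :
    num p (N + 1) (m + 1) = (1 - p ^ (N + 1)) * num p N m := by
  rw [num, prod_range_succ']
  simp only [Nat.sub_zero]
  rw [mul_comm]
  congr 1
  refine prod_congr rfl fun i hi => ?_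
  rw [mem_range] at hi
  congr 2
  omega

lemma num_succ {N m : ℕ} : num p N (m + 1) = num p N m * (1 - p ^ (N - m)) := by
  rw [num, prod_range_succ]; rfl

lemma Q_succ (m : ℕ) : Q p (m + 1) = Q p m * (1 - p ^ (m + 1)) := by
  rw [Q, prod_range_succ]; rfl

lemma qb_succ (hp1 : ‖p‖ < 1) {N m : ℕ} (hm : m ≤ N) :
    qb p (N + 1) (m + 1) = qb p N (m + 1) + p ^ (N - m) * qb p N m := by
  rcases eq_or_lt_of_le hm with rfl | hmN
  · rw [qb_diag hp1, qb_zero (Nat.lt_succ_self _), qb_diag hp1]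
    simp
  -- now m + 1 ≤ N
  have hm1 : m + 1 ≤ N := hmN
  have hQm := Q_ne hp1 m
  have hQm1 := Q_ne hp1 (m + 1)
  have hden : 1 - p ^ (m + 1) ≠ 0 := one_sub_pow_ne hp1 _ (Nat.le_add_left 1 m)
  rw [qb_eq_num_div_Q, qb_eq_num_div_Q, qb_eq_num_div_Q,
    num_succ_left hm, num_succ, Q_succ]
  have hpow2 : p ^ (N - m) * p ^ m = p ^ N := by
    rw [← pow_add]; congr 1; omega
  set a := num p N m with ha
  set q := Q p m with hq
  field_simp
  linear_combination (p * a) * hpow2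

lemma choose_succ_two (m : ℕ) : (m + 1).choose 2 = m.choose 2 + m := by
  rw [Nat.choose_succ_succ]
  simp [Nat.choose_one_right]
  ring

lemma qbinom (hp1 : ‖p‖ < 1) (x : ℂ) (N : ℕ) :
    ∏ k ∈ range N, (1 + x * p ^ k) =
      ∑ m ∈ range (N + 1), p ^ (m.choose 2) * qb p N m * x ^ m := by
  induction N with
  | zero => simp [qb]
  | succ N ih =>
    have key : ∀ m ∈ range (N + 1),
        p ^ ((m + 1).choose 2) * qb p (N + 1) (m + 1) * x ^ (m + 1)
          = p ^ ((m + 1).choose 2) * qb p N (m + 1) * x ^ (m + 1)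
            + p ^ N * x * (p ^ (m.choose 2) * qb p N m * x ^ m) := by
      intro m hm
      rw [mem_range] at hm
      have hmN : m ≤ N := Nat.lt_succ_iff.mp hm
      rw [qb_succ hp1 hmN]
      have hexp : p ^ ((m + 1).choose 2) * p ^ (N - m) = p ^ N * p ^ (m.choose 2) := by
        rw [← pow_add, ← pow_add]
        congr 1
        have := choose_succ_two m
        omega
      linear_combination (qb p N m * x ^ (m + 1)) * hexp
    rw [prod_range_succ, ih,
      sum_range_succ' (fun m => p ^ (m.choose 2) * qb p (N + 1) m * x ^ m) (N + 1),
      sum_congr rfl key, sum_add_distrib, ← mul_sum]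
    have h2 : ∑ m ∈ range (N + 1),
        p ^ ((m + 1).choose 2) * qb p N (m + 1) * x ^ (m + 1)
        = (∑ m ∈ range (N + 2), p ^ (m.choose 2) * qb p N m * x ^ m) - 1 := by
      rw [sum_range_succ' (fun m => p ^ (m.choose 2) * qb p N m * x ^ m) (N + 1)]
      simp [qb]
    have h3 : ∑ m ∈ range (N + 2), p ^ (m.choose 2) * qb p N m * x ^ m
        = ∑ m ∈ range (N + 1), p ^ (m.choose 2) * qb p N m * x ^ m := by
      rw [sum_range_succ, qb_zero (Nat.lt_succ_self N)]
      simp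
    rw [h2, h3]
    simp [qb]
    ring

def th (p ξ : ℂ) (j : ℤ) : ℂ := (-1 : ℂ) ^ j * ξ ^ j * p ^ (e j)

lemma th_shift (hp0 : p ≠ 0) {ξ : ℂ} (hξ : ξ ≠ 0) (N m : ℕ) :
    th p ξ ((m : ℤ) - N) =
      ((-1 : ℂ) ^ N)⁻¹ * (ξ ^ N)⁻¹ * p ^ ((N + 1).choose 2) *
        ((-1 : ℂ) ^ m * ξ ^ m * p ^ (m.choose 2) * ((p ^ N) ^ m)⁻¹) := by
  have hne : (-1 : ℂ) ≠ 0 := by norm_num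
  have he : e ((m : ℤ) - N) = (m.choose 2 : ℤ) - ((N * m : ℕ) : ℤ) + ((N + 1).choose 2 : ℤ) := by
    rw [e_sub, e_natCast]
    have h1 : ((m : ℤ)) * ((N : ℤ)) = ((N * m : ℕ) : ℤ) := by push_cast; ring
    have h2 : ((N : ℤ) + 1) = ((N + 1 : ℕ) : ℤ) := by push_cast; ring
    rw [h2, e_natCast]
    push_cast
    ring
  rw [th, he, zpow_sub₀ hne, zpow_add₀ hp0, zpow_sub₀ hp0, zpow_sub₀ hξ,
    zpow_natCast, zpow_natCast, zpow_natCast, zpow_natCast, zpow_natCast, zpow_natCast,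
    pow_mul]
  simp only [zpow_natCast]
  field_simp


lemma finite_jtp {p : ℂ} (hp1 : ‖p‖ < 1) (hp0 : p ≠ 0) {ξ : ℂ} (hξ : ξ ≠ 0) (N : ℕ) :
    ∑ m ∈ range (2 * N + 1), th p ξ ((m : ℤ) - N) * qb p (2 * N) m
      = (∏ k ∈ range N, (1 - ξ * p ^ k)) * ∏ k ∈ range N, (1 - p ^ (k + 1) * ξ⁻¹) := by
  have hne : (-1 : ℂ) ≠ 0 := by norm_num
  have hpN : (p : ℂ) ^ N ≠ 0 := pow_ne_zero _ hp0
  set x : ℂ := -ξ * (p ^ N)⁻¹ with hx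
  set C : ℂ := ((-1 : ℂ) ^ N)⁻¹ * (ξ ^ N)⁻¹ * p ^ ((N + 1).choose 2) with hC
  have hxm : ∀ m : ℕ, x ^ m = (-1 : ℂ) ^ m * ξ ^ m * ((p ^ N) ^ m)⁻¹ := by
    intro m
    rw [hx, show -ξ * (p ^ N)⁻¹ = (-1) * (ξ * (p ^ N)⁻¹) by ring, mul_pow, mul_pow, inv_pow]
    ring
  have hterm : ∀ m ∈ range (2 * N + 1), th p ξ ((m : ℤ) - N) * qb p (2 * N) m
      = C * (p ^ (m.choose 2) * qb p (2 * N) m * x ^ m) := by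
    intro m _
    rw [th_shift hp0 hξ N m, hxm m, hC]
    ring
  rw [sum_congr rfl hterm, ← mul_sum, ← qbinom hp1 x (2 * N)]
  have hsplit : ∏ k ∈ range (2 * N), (1 + x * p ^ k)
      = (∏ k ∈ range N, (1 + x * p ^ k)) * ∏ k ∈ range N, (1 + x * p ^ (N + k)) := by
    rw [two_mul, prod_range_add]
  have h2 : ∀ k ∈ range N, 1 + x * p ^ (N + k) = 1 - ξ * p ^ k := by
    intro k _
    rw [hx, pow_add]
    field_simp
    ring
  have h1 : ∀ k ∈ range N, 1 + x * p ^ k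
      = -ξ * (p ^ N)⁻¹ * p ^ k * (1 - p ^ (N - k) * ξ⁻¹) := by
    intro k hk; rw [mem_range] at hk
    have hpk : p ^ k * p ^ (N - k) = p ^ N := by rw [← pow_add]; congr 1; omega
    rw [hx]
    field_simp
    linear_combination (-1 : ℂ) * hpk
  rw [hsplit, prod_congr rfl h1, prod_congr rfl h2, prod_mul_distrib]
  have hgeom : ∏ k ∈ range N, (-ξ * (p ^ N)⁻¹ * p ^ k)
      = (-ξ * (p ^ N)⁻¹) ^ N * p ^ (N.choose 2) := by
    rw [prod_mul_distrib, prod_const, card_range, prod_pow_eq_pow_sum]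
    congr 1
    rw [Finset.sum_range_id, Nat.choose_two_right]
  have hrefl : ∏ k ∈ range N, (1 - p ^ (N - k) * ξ⁻¹)
      = ∏ k ∈ range N, (1 - p ^ (k + 1) * ξ⁻¹) := by
    rw [← prod_range_reflect (fun k => 1 - p ^ (k + 1) * ξ⁻¹) N]
    refine prod_congr rfl fun k hk => ?_
    rw [mem_range] at hk
    have h : N - 1 - k + 1 = N - k := by omega
    simp only [h]
  rw [hgeom, hrefl]
  have h5 : (-ξ * (p ^ N)⁻¹) ^ N = (-1 : ℂ) ^ N * ξ ^ N * (p ^ (N * N))⁻¹ := by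
    rw [show -ξ * (p ^ N)⁻¹ = (-1) * (ξ * (p ^ N)⁻¹) by ring, mul_pow, mul_pow, inv_pow,
      ← pow_mul]
    ring
  have hchoose : p ^ ((N + 1).choose 2) * p ^ (N.choose 2) = p ^ (N * N) := by
    rw [← pow_add, choose_two_add]
  have hs : C * ((-ξ * (p ^ N)⁻¹) ^ N * p ^ (N.choose 2)) = 1 := by
    rw [h5, hC]
    have hξN : ξ ^ N ≠ 0 := pow_ne_zero _ hξ
    have hnegN : (-1 : ℂ) ^ N ≠ 0 := pow_ne_zero _ hne
    have hpNN : (p : ℂ) ^ (N * N) ≠ 0 := pow_ne_zero _ hp0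
    field_simp
    linear_combination hchoose
  linear_combination ((∏ k ∈ range N, (1 - ξ * p ^ k)) *
    ∏ k ∈ range N, (1 - p ^ (k + 1) * ξ⁻¹)) * hs

-- ## Real bounds
section Bounds

variable {r : ℝ} (hr0 : 0 ≤ r) (hr1 : r < 1)

lemma prod_one_add_le_exp {g : ℕ → ℝ} (hg : ∀ i, 0 ≤ g i) (s : Finset ℕ) :
    ∏ i ∈ s, (1 + g i) ≤ Real.exp (∑ i ∈ s, g i) := by
  rw [Real.exp_sum]
  refine Finset.prod_le_prod (fun i _ => by linarith [hg i]) (fun i _ => ?_)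
  have := Real.add_one_le_exp (g i)
  linarith

include hr0 hr1

lemma sum_pow_succ_le (m : ℕ) : ∑ i ∈ range m, r ^ (i + 1) ≤ r / (1 - r) := by
  have h1 : ∑ i ∈ range m, r ^ (i + 1) = r * ∑ i ∈ range m, r ^ i := by
    rw [mul_sum]
    exact sum_congr rfl fun i _ => by ring
  have h2 : ∑ i ∈ range m, r ^ i ≤ (1 - r)⁻¹ := by
    have := Summable.sum_le_tsum (range m) (fun i _ => pow_nonneg hr0 i)
      (summable_geometric_of_lt_one hr0 hr1)
    rwa [tsum_geometric_of_lt_one hr0 hr1] at this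
  rw [h1, div_eq_mul_inv]
  exact mul_le_mul_of_nonneg_left h2 hr0

lemma sum_pow_rev_le {m N' : ℕ} (hm : m ≤ N') :
    ∑ i ∈ range m, r ^ (N' - i) ≤ r / (1 - r) := by
  have h1 : ∀ i ∈ range m, r ^ (N' - i) ≤ r ^ (m - i) := fun i hi =>
    pow_le_pow_of_le_one hr0 hr1.le (by rw [mem_range] at hi; omega)
  have h2 : ∑ i ∈ range m, r ^ (m - i) = ∑ i ∈ range m, r ^ (i + 1) := by
    rw [← Finset.sum_range_reflect (fun i => r ^ (i + 1)) m]
    refine sum_congr rfl fun i hi => ?_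
    rw [mem_range] at hi
    congr 1
    omega
  calc ∑ i ∈ range m, r ^ (N' - i) ≤ ∑ i ∈ range m, r ^ (m - i) := sum_le_sum h1
    _ ≤ r / (1 - r) := by rw [h2]; exact sum_pow_succ_le hr0 hr1 m

lemma fac_lower (i : ℕ) :
    1 ≤ (1 - r ^ (i + 1)) * (1 + r ^ (i + 1) * (1 - r)⁻¹) := by
  have hx0 : 0 ≤ r ^ (i + 1) := by positivity
  have hx : r ^ (i + 1) ≤ r := by
    calc r ^ (i + 1) ≤ r ^ 1 := pow_le_pow_of_le_one hr0 hr1.le (by omega)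
      _ = r := pow_one r
  have hs : (1 - r) * (1 - r)⁻¹ = 1 := mul_inv_cancel₀ (by linarith)
  have hspos : 0 < (1 - r)⁻¹ := inv_pos.2 (by linarith)
  nlinarith [mul_nonneg (mul_nonneg hx0 (sub_nonneg.2 hx)) hspos.le]

lemma prod_one_sub_pos (m : ℕ) : 0 < ∏ i ∈ range m, (1 - r ^ (i + 1)) := by
  refine Finset.prod_pos fun i _ => ?_
  have : r ^ (i + 1) ≤ r := by
    calc r ^ (i + 1) ≤ r ^ 1 := pow_le_pow_of_le_one hr0 hr1.le (by omega)
      _ = r := pow_one r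
  linarith

lemma prod_inv_aux_le (m : ℕ) :
    ∏ i ∈ range m, (1 + r ^ (i + 1) * (1 - r)⁻¹) ≤ Real.exp (r / (1 - r) ^ 2) := by
  have hspos : 0 < (1 - r)⁻¹ := inv_pos.2 (by linarith)
  have h1 := prod_one_add_le_exp (g := fun i => r ^ (i + 1) * (1 - r)⁻¹)
    (fun i => mul_nonneg (pow_nonneg hr0 _) hspos.le) (range m)
  refine h1.trans (Real.exp_le_exp.2 ?_)
  rw [← sum_mul]
  have h2 := sum_pow_succ_le hr0 hr1 m
  have h3 : 0 < (1 - r)⁻¹ := inv_pos.2 (by linarith)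
  calc (∑ i ∈ range m, r ^ (i + 1)) * (1 - r)⁻¹ ≤ (r / (1 - r)) * (1 - r)⁻¹ :=
        mul_le_mul_of_nonneg_right h2 h3.le
    _ = r / (1 - r) ^ 2 := by rw [division_def, division_def, mul_assoc, ← mul_inv, sq]

lemma one_le_prod_mul_exp (m : ℕ) :
    1 ≤ (∏ i ∈ range m, (1 - r ^ (i + 1))) * Real.exp (r / (1 - r) ^ 2) := by
  have h1 : 1 ≤ ∏ i ∈ range m, ((1 - r ^ (i + 1)) * (1 + r ^ (i + 1) * (1 - r)⁻¹)) := by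
    calc (1:ℝ) = ∏ _i ∈ range m, 1 := by simp
      _ ≤ _ := Finset.prod_le_prod (fun i _ => zero_le_one) (fun i _ => fac_lower hr0 hr1 i)
  rw [prod_mul_distrib] at h1
  refine h1.trans ?_
  exact mul_le_mul_of_nonneg_left (prod_inv_aux_le hr0 hr1 m)
    (prod_one_sub_pos hr0 hr1 m).le

lemma prod_one_sub_lower (m : ℕ) :
    (Real.exp (r / (1 - r) ^ 2))⁻¹ ≤ ∏ i ∈ range m, (1 - r ^ (i + 1)) := by
  have h := one_le_prod_mul_exp hr0 hr1 m
  have he : (0:ℝ) < Real.exp (r / (1 - r) ^ 2) := Real.exp_pos _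
  have h3 := mul_le_mul_of_nonneg_right h (inv_pos.2 he).le
  rw [one_mul, mul_assoc, mul_inv_cancel₀ he.ne', mul_one] at h3
  exact h3

end Bounds

-- ## Complex norm bounds
section CBounds

variable {p : ℂ} (hp1 : ‖p‖ < 1)

include hp1

lemma pow_norm_lt (k : ℕ) (hk : 1 ≤ k) : ‖p‖ ^ k < 1 := by
  have h0 := norm_nonneg p
  calc ‖p‖ ^ k ≤ ‖p‖ ^ 1 := pow_le_pow_of_le_one h0 hp1.le hk
    _ < 1 := by simpa using hp1

lemma qb_norm_le (N' m : ℕ) :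
    ‖qb p N' m‖ ≤ Real.exp (‖p‖ / (1 - ‖p‖)) * Real.exp (‖p‖ / (1 - ‖p‖) ^ 2) := by
  have hr0 := norm_nonneg p
  rcases le_or_gt m N' with hm | hm
  · rw [qb, norm_prod]
    have step : ∀ i ∈ range m, ‖(1 - p ^ (N' - i)) / (1 - p ^ (i + 1))‖ ≤
        (1 + ‖p‖ ^ (N' - i)) * (1 - ‖p‖ ^ (i + 1))⁻¹ := by
      intro i hi
      rw [norm_div, division_def]
      have hd : 0 < 1 - ‖p‖ ^ (i + 1) := by
        have := pow_norm_lt hp1 (i + 1) (by omega); linarith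
      have hnum : ‖1 - p ^ (N' - i)‖ ≤ 1 + ‖p‖ ^ (N' - i) := by
        calc ‖1 - p ^ (N' - i)‖ ≤ ‖(1 : ℂ)‖ + ‖p ^ (N' - i)‖ := norm_sub_le _ _
          _ = 1 + ‖p‖ ^ (N' - i) := by rw [norm_one, norm_pow]
      have hden : 1 - ‖p‖ ^ (i + 1) ≤ ‖1 - p ^ (i + 1)‖ := by
        have := norm_sub_norm_le (1 : ℂ) (p ^ (i + 1))
        rw [norm_one, norm_pow] at this
        exact this
      rw [← division_def]
      exact div_le_div₀ (by positivity) hnum hd hden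
    have h1 : ∏ i ∈ range m, ‖(1 - p ^ (N' - i)) / (1 - p ^ (i + 1))‖ ≤
        ∏ i ∈ range m, ((1 + ‖p‖ ^ (N' - i)) * (1 - ‖p‖ ^ (i + 1))⁻¹) :=
      Finset.prod_le_prod (fun i _ => norm_nonneg _) step
    rw [prod_mul_distrib] at h1
    have h2 : ∏ i ∈ range m, (1 + ‖p‖ ^ (N' - i)) ≤ Real.exp (‖p‖ / (1 - ‖p‖)) := by
      refine (prod_one_add_le_exp (fun i => pow_nonneg hr0 _) _).trans ?_
      exact Real.exp_le_exp.2 (sum_pow_rev_le hr0 hp1 hm)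
    have h3 : ∏ i ∈ range m, (1 - ‖p‖ ^ (i + 1))⁻¹ ≤ Real.exp (‖p‖ / (1 - ‖p‖) ^ 2) := by
      rw [prod_inv_distrib]
      have hP := prod_one_sub_pos hr0 hp1 m
      have hL := prod_one_sub_lower hr0 hp1 m
      have he : (0 : ℝ) < Real.exp (‖p‖ / (1 - ‖p‖) ^ 2) := Real.exp_pos _
      have := inv_anti₀ (inv_pos.2 he) hL
      rwa [inv_inv] at this
    refine h1.trans ?_
    refine mul_le_mul h2 h3 ?_ (Real.exp_pos _).le
    refine Finset.prod_nonneg fun i _ => inv_nonneg.2 ?_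
    have := pow_norm_lt hp1 (i + 1) (by omega)
    linarith
  · rw [qb_zero hm, norm_zero]
    positivity

lemma Q_norm_lower (m : ℕ) :
    (Real.exp (‖p‖ / (1 - ‖p‖) ^ 2))⁻¹ ≤ ‖Q p m‖ := by
  have hr0 := norm_nonneg p
  rw [Q, norm_prod]
  refine (prod_one_sub_lower hr0 hp1 m).trans ?_
  refine Finset.prod_le_prod (fun i _ => ?_) (fun i _ => ?_)
  · have := pow_norm_lt hp1 (i + 1) (by omega); linarith
  · have := norm_sub_norm_le (1 : ℂ) (p ^ (i + 1))
    rw [norm_one, norm_pow] at this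
    exact this

lemma multipliable_one_sub (c : ℂ) : Multipliable (fun k : ℕ => 1 - c * p ^ k) := by
  by_cases hz : ∀ k, 1 - c * p ^ k ≠ 0
  · have hlog : Summable (fun k : ℕ => Complex.log (1 - c * p ^ k)) := by
      have hgeo : Summable (fun k : ℕ => 3 / 2 * (‖c‖ * ‖p‖ ^ k)) :=
        (((summable_geometric_of_lt_one (norm_nonneg p) hp1).mul_left ‖c‖).mul_left (3 / 2))
      refine hgeo.of_norm_bounded_eventually ?_
      rw [Nat.cofinite_eq_atTop]
      have hten : Tendsto (fun k : ℕ => ‖c‖ * ‖p‖ ^ k) atTop (𝓝 0) := by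
        simpa using (tendsto_pow_atTop_nhds_zero_of_lt_one (norm_nonneg p) hp1).const_mul ‖c‖
      have hev : ∀ᶠ k : ℕ in atTop, ‖c‖ * ‖p‖ ^ k ≤ 1 / 2 :=
        hten.eventually_le_const (by norm_num)
      filter_upwards [hev] with k hk
      have hnorm : ‖-(c * p ^ k)‖ ≤ 1 / 2 := by
        rw [norm_neg, norm_mul, norm_pow]; exact hk
      have := Complex.norm_log_one_add_half_le_self hnorm
      rw [show (1 : ℂ) + -(c * p ^ k) = 1 - c * p ^ k by ring] at this
      refine this.trans ?_
      rw [norm_neg, norm_mul, norm_pow]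
    exact Complex.multipliable_of_summable_log hlog
  · push_neg at hz
    obtain ⟨k₀, hk₀⟩ := hz
    refine ⟨0, ?_⟩
    refine Tendsto.congr' ?_ tendsto_const_nhds
    filter_upwards [eventually_ge_atTop ({k₀} : Finset ℕ)] with s hs
    exact (prod_eq_zero (Finset.singleton_subset_iff.mp hs) hk₀).symm

end CBounds

-- ## Summability of the theta series
section Theta

variable {p ξ : ℂ} (hp0 : p ≠ 0) (hp1 : ‖p‖ < 1) (hξ : ξ ≠ 0)

include hp0 hξ in
lemma th_ne (j : ℤ) : th p ξ j ≠ 0 := by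
  refine mul_ne_zero (mul_ne_zero ?_ ?_) ?_
  · exact zpow_ne_zero _ (by norm_num)
  · exact zpow_ne_zero _ hξ
  · exact zpow_ne_zero _ hp0

lemma th_norm_nat (n : ℕ) : ‖th p ξ (n : ℤ)‖ = ‖ξ‖ ^ n * ‖p‖ ^ n.choose 2 := by
  rw [th, norm_mul, norm_mul, norm_zpow, norm_zpow, norm_zpow, e_natCast,
    zpow_natCast, zpow_natCast, zpow_natCast]
  simp

lemma th_norm_neg_nat (n : ℕ) :
    ‖th p ξ (-(n : ℤ))‖ = (‖ξ‖ ^ n)⁻¹ * ‖p‖ ^ (n + 1).choose 2 := by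
  rw [th, norm_mul, norm_mul, norm_zpow, norm_zpow, norm_zpow, e_neg_natCast,
    zpow_neg, zpow_neg, zpow_natCast, zpow_natCast, zpow_natCast]
  simp

include hp0 hp1 hξ in
lemma th_summable : Summable (fun n : ℤ => ‖th p ξ n‖) := by
  have hξ0 : 0 < ‖ξ‖ := norm_pos_iff.mpr hξ
  have hp00 : 0 < ‖p‖ := norm_pos_iff.mpr hp0
  rw [summable_norm_iff]
  apply Summable.of_nat_of_neg
  · refine summable_of_ratio_test_tendsto_lt_one (l := 0) one_pos
      (Eventually.of_forall fun n => th_ne hp0 hξ _) ?_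
    have heq : ∀ n : ℕ, ‖th p ξ ((n + 1 : ℕ) : ℤ)‖ / ‖th p ξ (n : ℤ)‖ = ‖ξ‖ * ‖p‖ ^ n := by
      intro n
      have hpos : 0 < ‖th p ξ (n : ℤ)‖ := norm_pos_iff.mpr (th_ne hp0 hξ _)
      have hstep : ‖th p ξ ((n + 1 : ℕ) : ℤ)‖ = (‖ξ‖ * ‖p‖ ^ n) * ‖th p ξ (n : ℤ)‖ := by
        rw [th_norm_nat, th_norm_nat, choose_succ_two, pow_add, pow_succ]
        ring
      rw [hstep, mul_div_assoc, div_self hpos.ne', mul_one]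
    refine Tendsto.congr (fun n => (heq n).symm) ?_
    have := (tendsto_pow_atTop_nhds_zero_of_lt_one (norm_nonneg p) hp1).const_mul ‖ξ‖
    simpa using this
  · refine summable_of_ratio_test_tendsto_lt_one (l := 0) one_pos
      (Eventually.of_forall fun n => th_ne hp0 hξ _) ?_
    have heq : ∀ n : ℕ, ‖th p ξ (-((n + 1 : ℕ) : ℤ))‖ / ‖th p ξ (-(n : ℤ))‖
        = ‖ξ‖⁻¹ * ‖p‖ ^ (n + 1) := by
      intro n
      have hpos : 0 < ‖th p ξ (-(n : ℤ))‖ := norm_pos_iff.mpr (th_ne hp0 hξ _)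
      have hstep : ‖th p ξ (-((n + 1 : ℕ) : ℤ))‖
          = (‖ξ‖⁻¹ * ‖p‖ ^ (n + 1)) * ‖th p ξ (-(n : ℤ))‖ := by
        rw [th_norm_neg_nat, th_norm_neg_nat, choose_succ_two (n + 1), pow_add,
          mul_inv, pow_add]
        ring
      rw [hstep, mul_div_assoc, div_self hpos.ne', mul_one]
    refine Tendsto.congr (fun n => (heq n).symm) ?_
    have h2 : Tendsto (fun n : ℕ => ‖p‖ ^ (n + 1)) atTop (𝓝 0) := by
      have := (tendsto_pow_atTop_nhds_zero_of_lt_one (norm_nonneg p) hp1).comp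
        (tendsto_add_atTop_nat 1)
      exact this
    simpa using h2.const_mul ‖ξ‖⁻¹

end Theta

-- ## qb as ratio of Q's
lemma num_eq_Q_div {p : ℂ} (hp1 : ‖p‖ < 1) {N' m : ℕ} (hm : m ≤ N') :
    num p N' m = Q p N' / Q p (N' - m) := by
  rw [eq_div_iff (Q_ne hp1 _)]
  have hre : ∏ i ∈ range m, (1 - p ^ (N' - m + i + 1)) = num p N' m := by
    rw [num, ← prod_range_reflect (fun i => 1 - p ^ (N' - i)) m]
    refine prod_congr rfl fun i hi => ?_
    rw [mem_range] at hi
    have hx : N' - m + i + 1 = N' - (m - 1 - i) := by omega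
    rw [hx]
  calc num p N' m * Q p (N' - m)
      = Q p (N' - m) * ∏ i ∈ range m, (1 - p ^ (N' - m + i + 1)) := by
        rw [hre, mul_comm]
    _ = ∏ i ∈ range ((N' - m) + m), (1 - p ^ (i + 1)) := by
        rw [prod_range_add, Q]
    _ = Q p N' := by rw [Nat.sub_add_cancel hm, Q]

lemma qb_eq_Q {p : ℂ} (hp1 : ‖p‖ < 1) {N' m : ℕ} (hm : m ≤ N') :
    qb p N' m = Q p N' / (Q p m * Q p (N' - m)) := by
  rw [qb_eq_num_div_Q, num_eq_Q_div hp1 hm, div_div, mul_comm]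

def F (p ξ : ℂ) (N : ℕ) (j : ℤ) : ℂ :=
  if 0 ≤ j + N then th p ξ j * qb p (2 * N) (j + N).toNat else 0

end
end JTP

open JTP in
theorem stmt_11 (p ξ : ℂ) (hp0 : 0 < ‖p‖) (hp1 : ‖p‖ < 1) (hξ : ξ ≠ 0) :
    Summable (fun n : ℤ => ‖(-1 : ℂ) ^ n * ξ ^ n * p ^ (n * (n - 1) / 2)‖) ∧
    ∑' n : ℤ, (-1 : ℂ) ^ n * ξ ^ n * p ^ (n * (n - 1) / 2) =
      ∏' k : ℕ, ((1 - ξ * p ^ k) * (1 - p ^ (k + 1)) * (1 - p ^ (k + 1) * ξ⁻¹)) := by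
  have hpne : p ≠ 0 := norm_pos_iff.mp hp0
  have hsm : Summable (fun n : ℤ => ‖th p ξ n‖) := th_summable hpne hp1 hξ
  have m1 : Multipliable (fun k : ℕ => 1 - ξ * p ^ k) := multipliable_one_sub hp1 ξ
  have mQ : Multipliable (fun k : ℕ => 1 - p ^ (k + 1)) := by
    refine (multipliable_one_sub hp1 p).congr fun k => ?_
    rw [← pow_succ']
  have m2 : Multipliable (fun k : ℕ => 1 - p ^ (k + 1) * ξ⁻¹) := by
    refine (multipliable_one_sub hp1 (p * ξ⁻¹)).congr fun k => ?_
    rw [pow_succ]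
    ring
  set Qinf := ∏' k : ℕ, (1 - p ^ (k + 1)) with hQinf
  have hQt : Tendsto (fun m : ℕ => Q p m) atTop (𝓝 Qinf) := mQ.hasProd.tendsto_prod_nat
  have hQinf_norm : (Real.exp (‖p‖ / (1 - ‖p‖) ^ 2))⁻¹ ≤ ‖Qinf‖ :=
    ge_of_tendsto hQt.norm (Eventually.of_forall (Q_norm_lower hp1))
  have hQne : Qinf ≠ 0 := by
    intro h
    rw [h, norm_zero] at hQinf_norm
    have : (0 : ℝ) < (Real.exp (‖p‖ / (1 - ‖p‖) ^ 2))⁻¹ := inv_pos.2 (Real.exp_pos _)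
    linarith
  have hFsum : ∀ N : ℕ, ∑' j : ℤ, F p ξ N j
      = (∏ k ∈ range N, (1 - ξ * p ^ k)) * ∏ k ∈ range N, (1 - p ^ (k + 1) * ξ⁻¹) := by
    intro N
    rw [← finite_jtp hp1 hpne hξ N]
    have hinj : Function.Injective (fun m : ℕ => (m : ℤ) - N) := fun a b h => by
      simp only at h; omega
    rw [tsum_eq_sum (s := (range (2 * N + 1)).map ⟨fun m : ℕ => (m : ℤ) - N, hinj⟩)
      (f := F p ξ N) ?_, Finset.sum_map]
    · refine Finset.sum_congr rfl fun m hm => ?_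
      rw [mem_range] at hm
      have h0 : (0 : ℤ) ≤ ((m : ℤ) - N) + N := by omega
      have htn : (((m : ℤ) - N) + N).toNat = m := by omega
      simp only [F, Function.Embedding.coeFn_mk, if_pos h0, htn]
    · intro j hj
      rw [F]
      by_cases h0 : (0 : ℤ) ≤ j + N
      · rw [if_pos h0]
        have hgt : 2 * N < (j + N).toNat := by
          by_contra hle
          push_neg at hle
          refine hj (Finset.mem_map.2 ⟨(j + N).toNat, mem_range.2 (by omega), ?_⟩)
          simp only [Function.Embedding.coeFn_mk]
          omega
        rw [qb_zero hgt, mul_zero]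
      · rw [if_neg h0]
  have hbound : ∀ N : ℕ, ∀ j : ℤ,
      ‖F p ξ N j‖ ≤ (Real.exp (‖p‖ / (1 - ‖p‖)) * Real.exp (‖p‖ / (1 - ‖p‖) ^ 2)) * ‖th p ξ j‖ := by
    intro N j
    rw [F]
    split_ifs with h0
    · rw [norm_mul, mul_comm]
      exact mul_le_mul_of_nonneg_right (qb_norm_le hp1 _ _) (norm_nonneg _)
    · rw [norm_zero]
      positivity
  have hab : ∀ j : ℤ, Tendsto (fun N : ℕ => F p ξ N j) atTop (𝓝 (th p ξ j * Qinf⁻¹)) := by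
    intro j
    have ht2 : Tendsto (fun N : ℕ => (j + (N : ℤ)).toNat) atTop atTop :=
      tendsto_atTop_atTop.2 fun b => ⟨b + j.natAbs, fun a ha => by omega⟩
    have ht2N : Tendsto (fun N : ℕ => 2 * N) atTop atTop :=
      tendsto_atTop_atTop.2 fun b => ⟨b, fun a ha => by omega⟩
    have ht3 : Tendsto (fun N : ℕ => 2 * N - (j + (N : ℤ)).toNat) atTop atTop :=
      tendsto_atTop_atTop.2 fun b => ⟨b + j.natAbs, fun a ha => by omega⟩
    have hlim : Tendsto (fun N : ℕ => th p ξ j *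
        (Q p (2 * N) / (Q p ((j + (N : ℤ)).toNat) * Q p (2 * N - (j + (N : ℤ)).toNat))))
        atTop (𝓝 (th p ξ j * (Qinf / (Qinf * Qinf)))) :=
      tendsto_const_nhds.mul ((hQt.comp ht2N).div ((hQt.comp ht2).mul (hQt.comp ht3))
        (mul_ne_zero hQne hQne))
    have hsimp : th p ξ j * (Qinf / (Qinf * Qinf)) = th p ξ j * Qinf⁻¹ := by
      field_simp
    rw [hsimp] at hlim
    refine hlim.congr' ?_
    filter_upwards [eventually_ge_atTop j.natAbs] with N hN
    have h0 : (0 : ℤ) ≤ j + N := by omega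
    have hm : (j + (N : ℤ)).toNat ≤ 2 * N := by omega
    rw [F, if_pos h0, qb_eq_Q hp1 hm]
  have htend := tendsto_tsum_of_dominated_convergence (hsm.mul_left _) hab
    (Eventually.of_forall hbound)
  have hprod : Tendsto (fun N : ℕ =>
      (∏ k ∈ range N, (1 - ξ * p ^ k)) * ∏ k ∈ range N, (1 - p ^ (k + 1) * ξ⁻¹)) atTop
      (𝓝 ((∏' k, (1 - ξ * p ^ k)) * ∏' k, (1 - p ^ (k + 1) * ξ⁻¹))) :=
    m1.hasProd.tendsto_prod_nat.mul m2.hasProd.tendsto_prod_nat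
  have hkey : ∑' j : ℤ, th p ξ j * Qinf⁻¹
      = (∏' k, (1 - ξ * p ^ k)) * ∏' k, (1 - p ^ (k + 1) * ξ⁻¹) :=
    tendsto_nhds_unique (Filter.Tendsto.congr (fun N => hFsum N) htend) hprod
  have hθ : ∑' j : ℤ, th p ξ j
      = (∏' k, (1 - ξ * p ^ k)) * (∏' k, (1 - p ^ (k + 1) * ξ⁻¹)) * Qinf := by
    have h1 : (∑' j : ℤ, th p ξ j) * Qinf⁻¹
        = (∏' k, (1 - ξ * p ^ k)) * ∏' k, (1 - p ^ (k + 1) * ξ⁻¹) := by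
      rw [← tsum_mul_right]; exact hkey
    calc ∑' j : ℤ, th p ξ j = (∑' j : ℤ, th p ξ j) * Qinf⁻¹ * Qinf := by
          field_simp
      _ = _ := by rw [h1]
  have hsplit : ∏' k : ℕ, ((1 - ξ * p ^ k) * (1 - p ^ (k + 1)) * (1 - p ^ (k + 1) * ξ⁻¹))
      = ((∏' k, (1 - ξ * p ^ k)) * Qinf) * ∏' k, (1 - p ^ (k + 1) * ξ⁻¹) := by
    rw [(m1.mul mQ).tprod_mul m2, m1.tprod_mul mQ]
  constructor
  · exact hsm
  · show ∑' n : ℤ, th p ξ n = _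
    rw [hθ, hsplit]
    ring
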